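/- Let j = (1/2)·sec(2π/9), set α = (1 − j)³·j², and set u = (1 − j)²/j. Then u¹⁹·(1 − α)⁷ = α⁸. -/
import Mathlib

/-- The real dilogarithm `Li₂(z) = ∑_{n=1}^∞ zⁿ/n²`. -/
noncomputable def dilog (z : ℝ) : ℝ := ∑' n : ℕ, z ^ (n + 1) / ((n : ℝ) + 1) ^ 2

/-- The (non-normalized) Rogers dilogarithm `L(z) = Li₂(z) + (1/2) log z log (1 - z)`. -/
noncomputable def rogersL (z : ℝ) : ℝ := dilog z + 1 / 2 * Real.log z * Real.log (1 - z)

/-- With `j = (1/2)·sec(2π/9)`, `α = (1−j)³·j²`, and `u = (1−j)²/j`, one has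
`u¹⁹·(1−α)⁷ = α⁸`. -/
theorem u_pow_19 (j α u : ℝ)
    (hj : j = 1 / 2 * (1 / Real.cos (2 * Real.pi / 9)))
    (hα : α = (1 - j) ^ 3 * j ^ 2)
    (hu : u = (1 - j) ^ 2 / j) :
    u ^ 19 * (1 - α) ^ 7 = α ^ 8 := by
  have hpi := Real.pi_pos
  set c := Real.cos (2 * Real.pi / 9) with hc
  have hcpos : 0 < c := by
    apply Real.cos_pos_of_mem_Ioo
    constructor
    · nlinarith
    · nlinarith
  have hcne : c ≠ 0 := ne_of_gt hcpos
  have htriple : 4 * c ^ 3 - 3 * c = -(1 / 2) := by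
    have h3 : (3 : ℝ) * (2 * Real.pi / 9) = Real.pi - Real.pi / 3 := by ring
    have := Real.cos_three_mul (2 * Real.pi / 9)
    rw [h3, Real.cos_pi_sub, Real.cos_pi_div_three] at this
    linarith [this]
  have hj3 : j ^ 3 = 3 * j ^ 2 - 1 := by
    rw [hj]; field_simp; nlinarith [htriple, sq_nonneg c]
  have hjne : j ≠ 0 := by
    intro h; rw [h] at hj3; norm_num at hj3
  subst hα hu
  field_simp
  linear_combination ((1 - j) ^ 24 * ((1:ℝ) - (14:ℝ)*j + (87:ℝ)*j^2 - (288:ℝ)*j^3 + (345:ℝ)*j^4 + (1387:ℝ)*j^5 - (8379:ℝ)*j^6 + (20565:ℝ)*j^7 - (17228:ℝ)*j^8 - (60301:ℝ)*j^9 + (273971:ℝ)*j^10 - (534465:ℝ)*j^11 + (373125:ℝ)*j^12 + (1036797:ℝ)*j^13 - (4107839:ℝ)*j^14 + (7264586:ℝ)*j^15 - (5806684:ℝ)*j^16 - (6388598:ℝ)*j^17 + (30873137:ℝ)*j^18 - (56979232:ℝ)*j^19 + (59902334:ℝ)*j^20 - (11768773:ℝ)*j^21 - (95635546:ℝ)*j^22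 + (230486787:ℝ)*j^23 - (322168310:ℝ)*j^24 + (292391242:ℝ)*j^25 - (101918892:ℝ)*j^26 - (217578714:ℝ)*j^27 + (570969567:ℝ)*j^28 - (844605185:ℝ)*j^29 + (960815810:ℝ)*j^30 - (908788627:ℝ)*j^31 + (737269840:ℝ)*j^32 - (520449591:ℝ)*j^33 + (321746847:ℝ)*j^34 - (174502043:ℝ)*j^35 + (82903698:ℝ)*j^36 - (34353642:ℝ)*j^37 + (12329972:ℝ)*j^38 - (3794839:ℝ)*j^39 + (987818:ℝ)*j^40 - (213389:ℝ)*j^41 + (37245:ℝ)*j^42 - (5049:ℝ)*j^43 + (499:ℝ)*j^44 - (32:ℝ)*j^45 + (1:ℝ)*j^46)) * hj3
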